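/- For every parameter h ∈ [0, 1/2], the diffusion coefficient of the lifted V map exists and is the linear function lim_{n→∞} (1/(2n)) ∫_0^1 (V_h^n(x) − x)² dx = h. -/

import Mathlib

open Filter

open MeasureTheory Set intervalIntegral

/-- The lifted V map `V_h`. -/
noncomputable def liftV (h x : ℝ) : ℝ :=
  if Int.fract x < 1/2 then (⌊x⌋ : ℝ) + (-2 * Int.fract x + 1 + h)
  else (⌊x⌋ : ℝ) + (2 * Int.fract x - 1 - h)

noncomputable def phiF (h x : ℝ) : ℝ := Int.fract x - (if Int.fract x ≤ h then 0 else 1)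

noncomputable def gF (h x : ℝ) : ℝ := liftV h x - x + phiF h x - phiF h (liftV h x)

lemma liftV_eq (h x : ℝ) :
    liftV h x = if Int.fract x < 1/2 then (x - Int.fract x) + (-2 * Int.fract x + 1 + h)
      else (x - Int.fract x) + (2 * Int.fract x - 1 - h) := by
  have : (⌊x⌋ : ℝ) = x - Int.fract x := by rw [Int.self_sub_fract]
  rw [liftV, this]

lemma measurable_liftV (h : ℝ) : Measurable (liftV h) := by
  have : liftV h = fun x => if Int.fract x < 1/2 then (x - Int.fract x) + (-2 * Int.fract x + 1 + h)
      else (x - Int.fract x) + (2 * Int.fract x - 1 - h) := funext (liftV_eq h)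
  rw [this]
  apply Measurable.ite (measurableSet_lt measurable_fract measurable_const)
  · exact ((measurable_id.sub measurable_fract).add
      (((measurable_const.mul measurable_fract).add measurable_const).add measurable_const))
  · exact ((measurable_id.sub measurable_fract).add
      (((measurable_const.mul measurable_fract).sub measurable_const).sub measurable_const))

lemma measurable_phiF (h : ℝ) : Measurable (phiF h) := by
  unfold phiF
  apply Measurable.sub measurable_fract
  exact Measurable.ite (measurableSet_le measurable_fract measurable_const)
    measurable_const measurable_const

lemma measurable_gF (h : ℝ) : Measurable (gF h) :=
  (((measurable_liftV h).sub measurable_id).add (measurable_phiF h)).sub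
    ((measurable_phiF h).comp (measurable_liftV h))

lemma liftV_add_one (h x : ℝ) : liftV h (x + 1) = liftV h x + 1 := by
  simp only [liftV, Int.fract_add_one, Int.floor_add_one]
  split <;> push_cast <;> ring

lemma phiF_add_one (h x : ℝ) : phiF h (x + 1) = phiF h x := by
  simp [phiF, Int.fract_add_one]

lemma abs_phiF_le (h x : ℝ) : |phiF h x| ≤ 1 := by
  have h1 := Int.fract_nonneg x
  have h2 := Int.fract_lt_one x
  rw [phiF, abs_le]; split <;> constructor <;> linarith

lemma abs_liftV_sub_le (h x : ℝ) (h0 : 0 ≤ h) (h1 : h ≤ 1/2) : |liftV h x - x| ≤ 2 := by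
  have hf1 := Int.fract_nonneg x
  have hf2 := Int.fract_lt_one x
  rw [liftV_eq, abs_le]
  split <;> constructor <;> linarith

lemma abs_gF_le (h x : ℝ) (h0 : 0 ≤ h) (h1 : h ≤ 1/2) : |gF h x| ≤ 4 := by
  have a := abs_liftV_sub_le h x h0 h1
  have b := abs_phiF_le h x
  have c := abs_phiF_le h (liftV h x)
  rw [gF]
  calc |liftV h x - x + phiF h x - phiF h (liftV h x)|
      ≤ |liftV h x - x + phiF h x| + |phiF h (liftV h x)| := abs_sub _ _
    _ ≤ |liftV h x - x| + |phiF h x| + |phiF h (liftV h x)| := by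
        gcongr; exact abs_add_le _ _
    _ ≤ 4 := by linarith

-- helper: bounded measurable functions are interval integrable
lemma II {f : ℝ → ℝ} (hf : Measurable f) {C : ℝ} (hC : ∀ x, |f x| ≤ C) (a b : ℝ) :
    IntervalIntegrable f volume a b := by
  have key : ∀ u v : ℝ, IntegrableOn f (Set.Ioc u v) volume := by
    intro u v
    haveI : Fact ((volume : Measure ℝ) (Set.Ioc u v) < ⊤) := ⟨measure_Ioc_lt_top⟩
    exact ⟨hf.aestronglyMeasurable,
      HasFiniteIntegral.of_bounded (C := C) (ae_of_all _ fun x => by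
        simpa [Real.norm_eq_abs] using hC x)⟩
  exact ⟨key a b, key b a⟩

-- helper: interval integral congruence on the open interval
lemma intInt_congr {a b : ℝ} (hab : a ≤ b) {f₁ f₂ : ℝ → ℝ}
    (hfg : ∀ x ∈ Set.Ioo a b, f₁ x = f₂ x) :
    ∫ x in a..b, f₁ x = ∫ x in a..b, f₂ x := by
  rw [intervalIntegral.integral_of_le hab, intervalIntegral.integral_of_le hab,
    MeasureTheory.integral_Ioc_eq_integral_Ioo, MeasureTheory.integral_Ioc_eq_integral_Ioo]
  exact setIntegral_congr_fun measurableSet_Ioo hfg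

section
variable {h : ℝ}

-- one-step measure preservation
lemma step {w : ℝ → ℝ} (hw : Measurable w) (hper : ∀ x, w (x + 1) = w x)
    {C : ℝ} (hC : ∀ x, |w x| ≤ C) :
    ∫ x in (0:ℝ)..1, w (liftV h x) = ∫ x in (0:ℝ)..1, w x := by
  have per : Function.Periodic w 1 := hper
  have hwV : Measurable fun x => w (liftV h x) := hw.comp (measurable_liftV h)
  have hCV : ∀ x, |w (liftV h x)| ≤ C := fun x => hC _
  have split : ∫ x in (0:ℝ)..1, w (liftV h x)
      = (∫ x in (0:ℝ)..(1/2), w (liftV h x)) + ∫ x in (1/2:ℝ)..1, w (liftV h x) :=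
    (intervalIntegral.integral_add_adjacent_intervals (II hwV hCV 0 (1/2))
      (II hwV hCV (1/2) 1)).symm
  have e1 : ∫ x in (0:ℝ)..(1/2), w (liftV h x) = ∫ x in (0:ℝ)..(1/2), w (-2 * x + (1 + h)) := by
    apply intInt_congr (by norm_num)
    intro x hx
    have hfl : ⌊x⌋ = 0 := Int.floor_eq_zero_iff.mpr ⟨hx.1.le, by linarith [hx.2]⟩
    have hfr : Int.fract x = x := by rw [Int.fract, hfl]; simp
    rw [liftV, hfr, if_pos hx.2, hfl]
    push_cast; ring_nf
  have e2 : ∫ x in (1/2:ℝ)..1, w (liftV h x) = ∫ x in (1/2:ℝ)..1, w (2 * x + (-1 - h)) := by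
    apply intInt_congr (by norm_num)
    intro x hx
    have hfl : ⌊x⌋ = 0 := Int.floor_eq_zero_iff.mpr ⟨by linarith [hx.1], hx.2⟩
    have hfr : Int.fract x = x := by rw [Int.fract, hfl]; simp
    rw [liftV, hfr, if_neg (by push_neg; linarith [hx.1]), hfl]
    push_cast; ring_nf
  have c1 : ∫ x in (0:ℝ)..(1/2), w (-2 * x + (1 + h)) = (1/2) * ∫ x in (0:ℝ)..1, w x := by
    rw [intervalIntegral.integral_comp_mul_add w (by norm_num : (-2:ℝ) ≠ 0) (1+h)]
    have h1e : (-2:ℝ) * 0 + (1 + h) = h + 1 := by ring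
    have h2e : (-2:ℝ) * (1/2) + (1 + h) = h := by ring
    rw [h1e, h2e, intervalIntegral.integral_symm, per.intervalIntegral_add_eq h 0]
    simp [smul_eq_mul]
  have c2 : ∫ x in (1/2:ℝ)..1, w (2 * x + (-1 - h)) = (1/2) * ∫ x in (0:ℝ)..1, w x := by
    rw [intervalIntegral.integral_comp_mul_add w (by norm_num : (2:ℝ) ≠ 0) (-1-h)]
    have h1e : (2:ℝ) * (1/2) + (-1 - h) = -h := by ring
    have h2e : (2:ℝ) * 1 + (-1 - h) = -h + 1 := by ring
    rw [h1e, h2e, per.intervalIntegral_add_eq (-h) 0]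
    norm_num
  rw [split, e1, e2, c1, c2]
  ring

lemma liftV_lo {x : ℝ} (hx0 : 0 ≤ x) (hx : x < 1/2) : liftV h x = -2*x + 1 + h := by
  have hfl : ⌊x⌋ = 0 := Int.floor_eq_zero_iff.mpr ⟨hx0, by linarith⟩
  have hfr : Int.fract x = x := by rw [Int.fract, hfl]; simp
  rw [liftV, hfr, if_pos hx, hfl]; push_cast; ring

lemma liftV_hi {x : ℝ} (hx0 : 1/2 ≤ x) (hx : x < 1) : liftV h x = 2*x - 1 - h := by
  have hfl : ⌊x⌋ = 0 := Int.floor_eq_zero_iff.mpr ⟨by linarith, hx⟩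
  have hfr : Int.fract x = x := by rw [Int.fract, hfl]; simp
  rw [liftV, hfr, if_neg (by push_neg; linarith), hfl]; push_cast; ring

lemma phiF_le {y : ℝ} (hy0 : 0 ≤ y) (hyh : y ≤ h) (hy1 : y < 1) : phiF h y = y := by
  have : Int.fract y = y := Int.fract_eq_self.mpr ⟨hy0, hy1⟩
  rw [phiF, this, if_pos hyh]; ring

lemma phiF_gt (h0 : 0 ≤ h) {y : ℝ} (hyh : h < y) (hy1 : y < 1) : phiF h y = y - 1 := by
  have hy0 : 0 ≤ y := le_trans h0 hyh.le
  have : Int.fract y = y := Int.fract_eq_self.mpr ⟨hy0, hy1⟩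
  rw [phiF, this, if_neg (by push_neg; exact hyh)]

lemma phiF_shift_le (h0 : 0 ≤ h) {y : ℝ} (hy0 : 1 ≤ y) (hyh : y - 1 ≤ h) (hy1 : y < 2) :
    phiF h y = y - 1 := by
  have : phiF h y = phiF h (y - 1) := by
    rw [← phiF_add_one h (y-1)]; ring_nf
  rw [this, phiF_le (by linarith) hyh (by linarith)]

lemma phiF_neg_gt (h0 : 0 ≤ h) {y : ℝ} (hyh : h < y + 1) (hy1 : y < 0) : phiF h y = y := by
  have : phiF h y = phiF h (y + 1) := (phiF_add_one h y).symm
  rw [this, phiF_gt h0 hyh (by linarith)]; ring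

lemma gOn1 (h0 : 0 ≤ h) (h1 : h ≤ 1/2) {x : ℝ} (hx : x ∈ Set.Ioo 0 h) : gF h x = 1 := by
  obtain ⟨hx0, hxh⟩ := hx
  have hxhalf : x < 1/2 := by linarith
  have hV : liftV h x = -2*x + 1 + h := liftV_lo hx0.le hxhalf
  have hphix : phiF h x = x := phiF_le hx0.le hxh.le (by linarith)
  have hphiV : phiF h (liftV h x) = h - 2*x := by
    rw [hV]
    rcases lt_or_ge (-2*x + 1 + h) 1 with hc | hc
    · rw [phiF_gt h0 (by linarith) hc]; ring
    · rw [phiF_shift_le h0 hc (by linarith) (by linarith)]; ring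
  rw [gF, hphix, hphiV, hV]; ring

lemma gOn2 (h0 : 0 ≤ h) (h1 : h ≤ 1/2) {x : ℝ} (hx : x ∈ Set.Ioo h (1/2)) : gF h x = 0 := by
  obtain ⟨hx0, hxc⟩ := hx
  have hV : liftV h x = -2*x + 1 + h := liftV_lo (le_trans h0 hx0.le) hxc
  have hphix : phiF h x = x - 1 := phiF_gt h0 hx0 (by linarith)
  have hphiV : phiF h (liftV h x) = h - 2*x := by
    rw [hV, phiF_gt h0 (by linarith) (by linarith)]; ring
  rw [gF, hphix, hphiV, hV]; ring

lemma gOn3 (h0 : 0 ≤ h) (h1 : h ≤ 1/2) {x : ℝ} (hx : x ∈ Set.Ioo (1/2) (1/2 + h)) : gF h x = -1 := by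
  obtain ⟨hx0, hxc⟩ := hx
  have hx1 : x < 1 := by linarith
  have hV : liftV h x = 2*x - 1 - h := liftV_hi hx0.le hx1
  have hphix : phiF h x = x - 1 := phiF_gt h0 (by linarith) hx1
  have hphiV : phiF h (liftV h x) = 2*x - 1 - h := by
    rw [hV]
    rcases lt_or_ge (2*x - 1 - h) 0 with hc | hc
    · exact phiF_neg_gt h0 (by linarith) hc
    · exact phiF_le hc (by linarith) (by linarith)
  rw [gF, hphix, hphiV, hV]; ring

lemma gOn4 (h0 : 0 ≤ h) (h1 : h ≤ 1/2) {x : ℝ} (hx : x ∈ Set.Ioo (1/2 + h) 1) : gF h x = 0 := by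
  obtain ⟨hx0, hx1⟩ := hx
  have hV : liftV h x = 2*x - 1 - h := liftV_hi (by linarith) hx1
  have hphix : phiF h x = x - 1 := phiF_gt h0 (by linarith) hx1
  have hphiV : phiF h (liftV h x) = 2*x - 2 - h := by
    rw [hV, phiF_gt h0 (by linarith) (by linarith)]; ring
  rw [gF, hphix, hphiV, hV]; ring


lemma gF_add_one (x : ℝ) : gF h (x + 1) = gF h x := by
  rw [gF, gF, liftV_add_one, phiF_add_one]
  have : phiF h (liftV h x + 1) = phiF h (liftV h x) := phiF_add_one h (liftV h x)
  rw [this]; ring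

lemma keyOrth (h0 : 0 ≤ h) (h1 : h ≤ 1/2) {u : ℝ → ℝ} (hu : Measurable u)
    (hper : ∀ x, u (x + 1) = u x) {C : ℝ} (hC : ∀ x, |u x| ≤ C) :
    ∫ x in (0:ℝ)..1, gF h x * u (liftV h x) = 0 := by
  have hC0 : 0 ≤ C := le_trans (abs_nonneg _) (hC 0)
  have hfm : Measurable fun x => gF h x * u (liftV h x) :=
    (measurable_gF h).mul (hu.comp (measurable_liftV h))
  have hfb : ∀ x, |gF h x * u (liftV h x)| ≤ 4 * C := by
    intro x
    rw [abs_mul]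
    exact mul_le_mul (abs_gF_le h x h0 h1) (hC _) (abs_nonneg _) (by norm_num)
  have i1 : IntervalIntegrable (fun x => gF h x * u (liftV h x)) volume 0 h := II hfm hfb 0 h
  have i2 := II hfm hfb h (1/2)
  have i3 := II hfm hfb (1/2) (1/2 + h)
  have i4 := II hfm hfb (1/2 + h) 1
  have split : ∫ x in (0:ℝ)..1, gF h x * u (liftV h x)
      = ((∫ x in (0:ℝ)..h, gF h x * u (liftV h x))
        + ∫ x in h..(1/2:ℝ), gF h x * u (liftV h x))
        + ((∫ x in (1/2:ℝ)..(1/2+h), gF h x * u (liftV h x))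
        + ∫ x in (1/2+h)..(1:ℝ), gF h x * u (liftV h x)) := by
    rw [intervalIntegral.integral_add_adjacent_intervals i1 i2,
      intervalIntegral.integral_add_adjacent_intervals i3 i4,
      intervalIntegral.integral_add_adjacent_intervals (i1.trans i2) (i3.trans i4)]
  have e1 : ∫ x in (0:ℝ)..h, gF h x * u (liftV h x) = ∫ x in (0:ℝ)..h, u (-2*x + (1+h)) := by
    apply intInt_congr h0
    intro x hx
    rw [gOn1 h0 h1 hx, liftV_lo hx.1.le (by linarith [hx.2]), one_mul]
    ring_nf
  have e2 : ∫ x in h..(1/2:ℝ), gF h x * u (liftV h x) = 0 := by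
    rw [show (0:ℝ) = ∫ x in h..(1/2:ℝ), (0:ℝ) from (intervalIntegral.integral_zero).symm]
    apply intInt_congr h1
    intro x hx
    rw [gOn2 h0 h1 hx, zero_mul]
  have e3 : ∫ x in (1/2:ℝ)..(1/2+h), gF h x * u (liftV h x)
      = ∫ x in (1/2:ℝ)..(1/2+h), -u (2*x + (-1-h)) := by
    apply intInt_congr (by linarith)
    intro x hx
    rw [gOn3 h0 h1 hx, liftV_hi hx.1.le (by linarith [hx.2])]
    ring_nf
  have e4 : ∫ x in (1/2+h)..(1:ℝ), gF h x * u (liftV h x) = 0 := by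
    rw [show (0:ℝ) = ∫ x in (1/2+h)..(1:ℝ), (0:ℝ) from (intervalIntegral.integral_zero).symm]
    apply intInt_congr (by linarith)
    intro x hx
    rw [gOn4 h0 h1 hx, zero_mul]
  have c1 : ∫ x in (0:ℝ)..h, u (-2*x + (1+h)) = (1/2) * ∫ x in (1-h)..(1+h), u x := by
    rw [intervalIntegral.integral_comp_mul_add u (by norm_num : (-2:ℝ) ≠ 0) (1+h)]
    have e1' : (-2:ℝ) * 0 + (1 + h) = 1+h := by ring
    have e2' : (-2:ℝ) * h + (1 + h) = 1-h := by ring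
    rw [e1', e2', intervalIntegral.integral_symm]
    simp [smul_eq_mul]
  have c3 : ∫ x in (1/2:ℝ)..(1/2+h), -u (2*x + (-1-h)) = -((1/2) * ∫ x in (1-h)..(1+h), u x) := by
    rw [intervalIntegral.integral_neg, intervalIntegral.integral_comp_mul_add u
      (by norm_num : (2:ℝ) ≠ 0) (-1-h)]
    have e1' : (2:ℝ) * (1/2) + (-1 - h) = -h := by ring
    have e2' : (2:ℝ) * (1/2+h) + (-1 - h) = h := by ring
    rw [e1', e2']
    have shift : ∫ x in (-h)..h, u x = ∫ x in (1-h)..(1+h), u x := by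
      have : ∀ x, u x = u (x + 1) := fun x => (hper x).symm
      rw [intervalIntegral.integral_congr (g := fun x => u (x+1))
        (fun x _ => this x), intervalIntegral.integral_comp_add_right u 1,
        show -h+1 = 1-h from by ring, show h+1 = 1+h from by ring]
    rw [shift]
    simp [smul_eq_mul]
  rw [split, e1, e2, e3, e4, c1, c3]; ring

lemma gsq (h0 : 0 ≤ h) (h1 : h ≤ 1/2) : ∫ x in (0:ℝ)..1, (gF h x)^2 = 2*h := by
  have hfm : Measurable fun x => (gF h x)^2 := (measurable_gF h).pow_const 2
  have hfb : ∀ x, |(gF h x)^2| ≤ 16 := by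
    intro x
    have hb := abs_gF_le h x h0 h1
    rw [abs_pow]
    nlinarith [abs_nonneg (gF h x)]
  have i1 := II hfm hfb 0 h
  have i2 := II hfm hfb h (1/2)
  have i3 := II hfm hfb (1/2) (1/2 + h)
  have i4 := II hfm hfb (1/2 + h) 1
  have split : ∫ x in (0:ℝ)..1, (gF h x)^2
      = ((∫ x in (0:ℝ)..h, (gF h x)^2) + ∫ x in h..(1/2:ℝ), (gF h x)^2)
        + ((∫ x in (1/2:ℝ)..(1/2+h), (gF h x)^2) + ∫ x in (1/2+h)..(1:ℝ), (gF h x)^2) := by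
    rw [intervalIntegral.integral_add_adjacent_intervals i1 i2,
      intervalIntegral.integral_add_adjacent_intervals i3 i4,
      intervalIntegral.integral_add_adjacent_intervals (i1.trans i2) (i3.trans i4)]
  have e1 : ∫ x in (0:ℝ)..h, (gF h x)^2 = h := by
    rw [show ∫ x in (0:ℝ)..h, (gF h x)^2 = ∫ x in (0:ℝ)..h, (1:ℝ) from
      intInt_congr h0 (fun x hx => by rw [gOn1 h0 h1 hx]; norm_num)]
    simp
  have e2 : ∫ x in h..(1/2:ℝ), (gF h x)^2 = 0 := by
    rw [show ∫ x in h..(1/2:ℝ), (gF h x)^2 = ∫ x in h..(1/2:ℝ), (0:ℝ) from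
      intInt_congr h1 (fun x hx => by rw [gOn2 h0 h1 hx]; norm_num)]
    simp
  have e3 : ∫ x in (1/2:ℝ)..(1/2+h), (gF h x)^2 = h := by
    rw [show ∫ x in (1/2:ℝ)..(1/2+h), (gF h x)^2 = ∫ x in (1/2:ℝ)..(1/2+h), (1:ℝ) from
      intInt_congr (by linarith) (fun x hx => by rw [gOn3 h0 h1 hx]; norm_num)]
    simp
  have e4 : ∫ x in (1/2+h)..(1:ℝ), (gF h x)^2 = 0 := by
    rw [show ∫ x in (1/2+h)..(1:ℝ), (gF h x)^2 = ∫ x in (1/2+h)..(1:ℝ), (0:ℝ) from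
      intInt_congr (by linarith) (fun x hx => by rw [gOn4 h0 h1 hx]; norm_num)]
    simp
  rw [split, e1, e2, e3, e4]; ring


lemma iter_add_one (n : ℕ) (x : ℝ) : (liftV h)^[n] (x + 1) = (liftV h)^[n] x + 1 := by
  induction n with
  | zero => simp
  | succ n ih =>
    rw [Function.iterate_succ_apply', Function.iterate_succ_apply', ih, liftV_add_one]

lemma inv_iter {w : ℝ → ℝ} (hw : Measurable w) (hper : ∀ x, w (x + 1) = w x)
    {C : ℝ} (hC : ∀ x, |w x| ≤ C) (n : ℕ) :
    ∫ x in (0:ℝ)..1, w ((liftV h)^[n] x) = ∫ x in (0:ℝ)..1, w x := by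
  induction n with
  | zero => simp
  | succ n ih =>
    have e : ∀ x, w ((liftV h)^[n+1] x) = (fun y => w ((liftV h)^[n] y)) (liftV h x) := by
      intro x
      simp only [Function.iterate_succ_apply]
    rw [intervalIntegral.integral_congr (g := fun x => (fun y => w ((liftV h)^[n] y)) (liftV h x))
      (fun x _ => e x)]
    rw [step (w := fun y => w ((liftV h)^[n] y)) (hw.comp ((measurable_liftV h).iterate n))
      (fun x => by show w ((liftV h)^[n] (x+1)) = w ((liftV h)^[n] x); rw [iter_add_one, hper])
      (fun x => hC _)]
    exact ih

lemma An (h0 : 0 ≤ h) (h1 : h ≤ 1/2) (n : ℕ) :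
    ∫ x in (0:ℝ)..1, (∑ k ∈ Finset.range n, gF h ((liftV h)^[k] x))^2 = 2*h*n := by
  have hgm : ∀ k : ℕ, Measurable fun x => gF h ((liftV h)^[k] x) :=
    fun k => (measurable_gF h).comp ((measurable_liftV h).iterate k)
  have hgb : ∀ (k : ℕ) x, |gF h ((liftV h)^[k] x)| ≤ 4 := fun k x => abs_gF_le h _ h0 h1
  have hprodm : ∀ j k : ℕ, Measurable fun x => gF h ((liftV h)^[j] x) * gF h ((liftV h)^[k] x) :=
    fun j k => (hgm j).mul (hgm k)
  have hprodb : ∀ (j k : ℕ) x, |gF h ((liftV h)^[j] x) * gF h ((liftV h)^[k] x)| ≤ 16 := by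
    intro j k x
    rw [abs_mul]
    exact le_trans (mul_le_mul (hgb j x) (hgb k x) (abs_nonneg _) (by norm_num)) (by norm_num)
  -- off-diagonal terms vanish
  have hlt : ∀ j k : ℕ, j < k →
      ∫ x in (0:ℝ)..1, gF h ((liftV h)^[j] x) * gF h ((liftV h)^[k] x) = 0 := by
    intro j k hjk
    set m := k - j with hm
    have hm1 : 1 ≤ m := by omega
    have hcomp : ∀ x, gF h ((liftV h)^[j] x) * gF h ((liftV h)^[k] x)
        = (fun y => gF h y * gF h ((liftV h)^[m] y)) ((liftV h)^[j] x) := by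
      intro x
      have hk : k = m + j := by omega
      simp only
      rw [hk, Function.iterate_add_apply]
    rw [intervalIntegral.integral_congr
      (g := fun x => (fun y => gF h y * gF h ((liftV h)^[m] y)) ((liftV h)^[j] x))
      (fun x _ => hcomp x)]
    have wper : ∀ y : ℝ, gF h (y+1) * gF h ((liftV h)^[m] (y+1)) = gF h y * gF h ((liftV h)^[m] y) := by
      intro y
      rw [gF_add_one, iter_add_one, gF_add_one]
    have wbd : ∀ y : ℝ, |gF h y * gF h ((liftV h)^[m] y)| ≤ 16 := by
      intro y
      rw [abs_mul]
      exact le_trans (mul_le_mul (abs_gF_le h _ h0 h1) (abs_gF_le h _ h0 h1) (abs_nonneg _)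
        (by norm_num)) (by norm_num)
    rw [inv_iter (w := fun y => gF h y * gF h ((liftV h)^[m] y))
      ((measurable_gF h).mul ((measurable_gF h).comp ((measurable_liftV h).iterate m)))
      wper wbd j]
    -- now peel one application of liftV
    have epe : ∀ y : ℝ, gF h y * gF h ((liftV h)^[m] y)
        = gF h y * (fun z => gF h ((liftV h)^[m-1] z)) (liftV h y) := by
      intro y
      have hm' : m = (m-1) + 1 := by omega
      have hit : (liftV h)^[m] y = (liftV h)^[m-1] (liftV h y) := by
        conv_lhs => rw [hm']
        rw [Function.iterate_succ_apply]
      simp only [hit]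
    rw [intervalIntegral.integral_congr
      (g := fun y => gF h y * (fun z => gF h ((liftV h)^[m-1] z)) (liftV h y))
      (fun y _ => epe y)]
    exact keyOrth h0 h1 ((measurable_gF h).comp ((measurable_liftV h).iterate (m-1)))
      (fun z => by show gF h ((liftV h)^[m-1] (z+1)) = gF h ((liftV h)^[m-1] z); rw [iter_add_one, gF_add_one]) (hgb (m-1))
  have hne : ∀ j k : ℕ, j ≠ k →
      ∫ x in (0:ℝ)..1, gF h ((liftV h)^[j] x) * gF h ((liftV h)^[k] x) = 0 := by
    intro j k hjk
    rcases lt_or_gt_of_ne hjk with hc | hc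
    · exact hlt j k hc
    · rw [intervalIntegral.integral_congr
        (g := fun x => gF h ((liftV h)^[k] x) * gF h ((liftV h)^[j] x))
        (fun x _ => mul_comm _ _)]
      exact hlt k j hc
  have hdiag : ∀ j : ℕ,
      ∫ x in (0:ℝ)..1, gF h ((liftV h)^[j] x) * gF h ((liftV h)^[j] x) = 2*h := by
    intro j
    have e : ∀ x, gF h ((liftV h)^[j] x) * gF h ((liftV h)^[j] x)
        = (fun y => (gF h y)^2) ((liftV h)^[j] x) := by
      intro x; simp only [sq]
    rw [intervalIntegral.integral_congr (g := fun x => (fun y => (gF h y)^2) ((liftV h)^[j] x))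
      (fun x _ => e x)]
    rw [inv_iter (w := fun y => (gF h y)^2) ((measurable_gF h).pow_const 2)
      (fun y => by show (gF h (y+1))^2 = (gF h y)^2; rw [gF_add_one])
      (C := 16) (fun y => by
        have hb := abs_gF_le h y h0 h1
        rw [abs_pow]
        nlinarith [abs_nonneg (gF h y)]) j]
    exact gsq h0 h1
  -- expand the square and sum
  have expand : ∀ x : ℝ, (∑ k ∈ Finset.range n, gF h ((liftV h)^[k] x))^2
      = ∑ j ∈ Finset.range n, ∑ k ∈ Finset.range n,
          gF h ((liftV h)^[j] x) * gF h ((liftV h)^[k] x) := by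
    intro x
    rw [sq, Finset.sum_mul_sum]
  rw [intervalIntegral.integral_congr (g := fun x => ∑ j ∈ Finset.range n, ∑ k ∈ Finset.range n,
      gF h ((liftV h)^[j] x) * gF h ((liftV h)^[k] x)) (fun x _ => expand x)]
  have isum : ∀ j : ℕ, IntervalIntegrable (fun x => ∑ k ∈ Finset.range n,
      gF h ((liftV h)^[j] x) * gF h ((liftV h)^[k] x)) volume 0 1 := by
    intro j
    apply II (Finset.measurable_sum _ (fun k _ => hprodm j k)) (C := 16*n)
    intro x
    calc |∑ k ∈ Finset.range n, gF h ((liftV h)^[j] x) * gF h ((liftV h)^[k] x)|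
        ≤ ∑ k ∈ Finset.range n, |gF h ((liftV h)^[j] x) * gF h ((liftV h)^[k] x)| :=
          Finset.abs_sum_le_sum_abs _ _
      _ ≤ ∑ _k ∈ Finset.range n, (16:ℝ) := Finset.sum_le_sum (fun k _ => hprodb j k x)
      _ = 16*n := by simp [mul_comm]
  rw [intervalIntegral.integral_finset_sum (μ := volume) (fun j _ => isum j)]
  have inner : ∀ j : ℕ, ∫ x in (0:ℝ)..1, ∑ k ∈ Finset.range n,
      gF h ((liftV h)^[j] x) * gF h ((liftV h)^[k] x)
      = ∑ k ∈ Finset.range n, ∫ x in (0:ℝ)..1,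
          gF h ((liftV h)^[j] x) * gF h ((liftV h)^[k] x) := by
    intro j
    exact intervalIntegral.integral_finset_sum (μ := volume)
      (fun k _ => II (hprodm j k) (hprodb j k) 0 1)
  calc ∑ j ∈ Finset.range n, ∫ x in (0:ℝ)..1, ∑ k ∈ Finset.range n,
        gF h ((liftV h)^[j] x) * gF h ((liftV h)^[k] x)
      = ∑ j ∈ Finset.range n, ∑ k ∈ Finset.range n, ∫ x in (0:ℝ)..1,
        gF h ((liftV h)^[j] x) * gF h ((liftV h)^[k] x) :=
        Finset.sum_congr rfl (fun j _ => inner j)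
    _ = ∑ j ∈ Finset.range n, ∑ k ∈ Finset.range n, (if j = k then 2*h else 0) := by
        apply Finset.sum_congr rfl
        intro j _
        apply Finset.sum_congr rfl
        intro k _
        by_cases hc : j = k
        · rw [if_pos hc, hc]; exact hdiag k
        · rw [if_neg hc]; exact hne j k hc
    _ = ∑ j ∈ Finset.range n, (if j ∈ Finset.range n then 2*h else 0) :=
        Finset.sum_congr rfl (fun j _ => Finset.sum_ite_eq (Finset.range n) j (fun _ => 2*h))
    _ = 2*h*n := by
        rw [Finset.sum_congr rfl (fun j hj => if_pos hj), Finset.sum_const, Finset.card_range]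
        simp [mul_comm]



lemma Sid (n : ℕ) (x : ℝ) : (liftV h)^[n] x - x
    = (∑ k ∈ Finset.range n, gF h ((liftV h)^[k] x))
      + (phiF h ((liftV h)^[n] x) - phiF h x) := by
  induction n with
  | zero => simp
  | succ n ih =>
    rw [Finset.sum_range_succ, Function.iterate_succ_apply' (liftV h) n x]
    have hg : gF h ((liftV h)^[n] x) = liftV h ((liftV h)^[n] x) - (liftV h)^[n] x
        + phiF h ((liftV h)^[n] x) - phiF h (liftV h ((liftV h)^[n] x)) := rfl
    linarith [ih, hg]

end

theorem stmt14 (h : ℝ) (hh : h ∈ Set.Icc (0:ℝ) (1/2)) :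
    Tendsto (fun n : ℕ => (1/(2*(n:ℝ))) * ∫ x in (0:ℝ)..1, ((liftV h)^[n] x - x)^2)
      atTop (nhds h) := by
  obtain ⟨h0, h1⟩ := hh
  have bound : ∀ (n : ℕ) (t : ℝ), 0 < t →
      |(∫ x in (0:ℝ)..1, ((liftV h)^[n] x - x)^2) - 2*h*n| ≤ t*(2*h*n) + (4/t + 4) := by
    intro n t ht
    have htne : t ≠ 0 := ne_of_gt ht
    set G : ℝ → ℝ := fun x => ∑ k ∈ Finset.range n, gF h ((liftV h)^[k] x) with hG
    set R : ℝ → ℝ := fun x => phiF h ((liftV h)^[n] x) - phiF h x with hR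
    have hGm : Measurable G := Finset.measurable_sum _
      (fun k _ => (measurable_gF h).comp ((measurable_liftV h).iterate k))
    have hGb : ∀ x, |G x| ≤ 4*n := by
      intro x
      rw [hG]
      calc |∑ k ∈ Finset.range n, gF h ((liftV h)^[k] x)|
          ≤ ∑ k ∈ Finset.range n, |gF h ((liftV h)^[k] x)| := Finset.abs_sum_le_sum_abs _ _
        _ ≤ ∑ _k ∈ Finset.range n, (4:ℝ) :=
            Finset.sum_le_sum (fun k _ => abs_gF_le h _ h0 h1)
        _ = 4*n := by simp [mul_comm]
    have hRm : Measurable R :=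
      ((measurable_phiF h).comp ((measurable_liftV h).iterate n)).sub (measurable_phiF h)
    have hRb : ∀ x, |R x| ≤ 2 := by
      intro x
      rw [hR]
      calc |phiF h ((liftV h)^[n] x) - phiF h x|
          ≤ |phiF h ((liftV h)^[n] x)| + |phiF h x| := abs_sub _ _
        _ ≤ 2 := by linarith [abs_phiF_le h ((liftV h)^[n] x), abs_phiF_le h x]
    have hid : ∀ x : ℝ, ((liftV h)^[n] x - x)^2 = (G x)^2 + (2*(G x)*(R x) + (R x)^2) := by
      intro x
      have e : (liftV h)^[n] x - x = G x + R x := by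
        rw [hG, hR]; exact Sid n x
      rw [e]; ring
    have hAn : ∫ x in (0:ℝ)..1, (G x)^2 = 2*h*n := by
      rw [hG]; exact An h0 h1 n
    have hGi : IntervalIntegrable (fun x => (G x)^2) volume 0 1 := by
      apply II (hGm.pow_const 2) (C := (4*n)^2)
      intro x
      rw [abs_pow]
      exact pow_le_pow_left₀ (abs_nonneg _) (hGb x) 2
    have hEm : Measurable fun x => 2*(G x)*(R x) + (R x)^2 :=
      ((hGm.const_mul 2).mul hRm).add (hRm.pow_const 2)
    have hEb : ∀ x, |2*(G x)*(R x) + (R x)^2| ≤ 16*(n:ℝ) + 4 := by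
      intro x
      have g1 := hGb x; have r1 := hRb x
      have g0 := abs_nonneg (G x); have r0 := abs_nonneg (R x)
      calc |2*(G x)*(R x) + (R x)^2| ≤ |2*(G x)*(R x)| + |(R x)^2| := abs_add_le _ _
        _ = 2 * |G x| * |R x| + |R x|^2 := by
            rw [abs_mul, abs_mul, abs_two, abs_pow]
        _ ≤ 16*(n:ℝ) + 4 := by nlinarith [mul_le_mul g1 r1 r0 (by positivity : (0:ℝ) ≤ 4*(n:ℝ))]
    have hEi : IntervalIntegrable (fun x => 2*(G x)*(R x) + (R x)^2) volume 0 1 :=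
      II hEm hEb 0 1
    have hsplit : ∫ x in (0:ℝ)..1, ((liftV h)^[n] x - x)^2
        = (∫ x in (0:ℝ)..1, (G x)^2) + ∫ x in (0:ℝ)..1, (2*(G x)*(R x) + (R x)^2) := by
      rw [intervalIntegral.integral_congr
        (g := fun x => (G x)^2 + (2*(G x)*(R x) + (R x)^2)) (fun x _ => hid x)]
      exact intervalIntegral.integral_add hGi hEi
    -- pointwise bound for the error term
    have eb : ∀ x : ℝ, |2*(G x)*(R x) + (R x)^2| ≤ t*(G x)^2 + (4/t + 4) := by
      intro x
      have r1 := hRb x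
      have g0 := abs_nonneg (G x); have r0 := abs_nonneg (R x)
      have step1 : |2*(G x)*(R x) + (R x)^2| ≤ 2 * |G x| * |R x| + |R x|^2 := by
        calc |2*(G x)*(R x) + (R x)^2| ≤ |2*(G x)*(R x)| + |(R x)^2| := abs_add_le _ _
          _ = 2 * |G x| * |R x| + |R x|^2 := by rw [abs_mul, abs_mul, abs_two, abs_pow]
      have step2 : 2 * |G x| * |R x| ≤ t * |G x|^2 + |R x|^2/t := by
        have H : (2 * |G x| * |R x|)*t ≤ (t * |G x|^2 + |R x|^2/t)*t := by
          have expandRHS : (t * |G x|^2 + |R x|^2/t)*t = t^2 * |G x|^2 + |R x|^2 := by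
            field_simp
          rw [expandRHS]
          nlinarith [sq_nonneg (t * |G x| - |R x|)]
        exact le_of_mul_le_mul_right H ht
      have step4 : |R x|^2 ≤ 4 := by nlinarith
      have step3 : |R x|^2/t ≤ 4/t := by gcongr
      have : t * |G x|^2 = t*(G x)^2 := by rw [sq_abs]
      linarith [step1, step2, step3, step4]
    have ebound : |∫ x in (0:ℝ)..1, (2*(G x)*(R x) + (R x)^2)| ≤ t*(2*h*n) + (4/t + 4) := by
      have habs : |∫ x in (0:ℝ)..1, (2*(G x)*(R x) + (R x)^2)|
          ≤ ∫ x in (0:ℝ)..1, |2*(G x)*(R x) + (R x)^2| :=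
        intervalIntegral.abs_integral_le_integral_abs (by norm_num)
      have hmono : (∫ x in (0:ℝ)..1, |2*(G x)*(R x) + (R x)^2|)
          ≤ ∫ x in (0:ℝ)..1, (t*(G x)^2 + (4/t + 4)) := by
        apply intervalIntegral.integral_mono_on (by norm_num)
          (II hEm.abs (fun x => by rw [abs_abs]; exact hEb x) 0 1)
          (((hGi.const_mul t).add (intervalIntegrable_const)))
        exact fun x _ => eb x
      have hval : ∫ x in (0:ℝ)..1, (t*(G x)^2 + (4/t + 4))
          = t*(2*h*n) + (4/t + 4) := by
        rw [intervalIntegral.integral_add (hGi.const_mul t) intervalIntegrable_const,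
          intervalIntegral.integral_const_mul, hAn, intervalIntegral.integral_const]
        simp
      linarith [habs, hmono, le_of_eq hval]
    have hdiff : (∫ x in (0:ℝ)..1, ((liftV h)^[n] x - x)^2) - 2*h*n
        = ∫ x in (0:ℝ)..1, (2*(G x)*(R x) + (R x)^2) := by
      rw [hsplit, hAn]; ring
    rw [hdiff]
    exact ebound
  -- conclude the limit from the bound
  rw [Metric.tendsto_atTop]
  intro ε hε
  obtain ⟨N, hN⟩ := exists_nat_gt ((4/ε + 4)/ε)
  refine ⟨N+1, fun n hn => ?_⟩
  have hn1 : 1 ≤ n := le_trans (by omega) hn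
  have hnpos : (0:ℝ) < n := by exact_mod_cast Nat.pos_of_ne_zero (by omega)
  rw [Real.dist_eq]
  have hb := bound n ε hε
  have hNn : (N:ℝ) < n := by exact_mod_cast (by omega : N < n)
  have hN' : ((4/ε + 4)/ε) < n := lt_trans hN hNn
  have k1 : 4/ε + 4 < ε*n := by
    rw [div_lt_iff₀ hε] at hN'
    linarith
  have hpos2 : (0:ℝ) < 1/(2*n) := by positivity
  have heq : (1/(2*(n:ℝ))) * (∫ x in (0:ℝ)..1, ((liftV h)^[n] x - x)^2) - h
      = ((∫ x in (0:ℝ)..1, ((liftV h)^[n] x - x)^2) - 2*h*n) * (1/(2*n)) := by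
    field_simp
  calc |(1/(2*(n:ℝ))) * (∫ x in (0:ℝ)..1, ((liftV h)^[n] x - x)^2) - h|
      = |(∫ x in (0:ℝ)..1, ((liftV h)^[n] x - x)^2) - 2*h*n| * (1/(2*n)) := by
        rw [heq, abs_mul, abs_of_pos hpos2]
    _ ≤ (ε*(2*h*n) + (4/ε + 4)) * (1/(2*n)) := mul_le_mul_of_nonneg_right hb hpos2.le
    _ = ε*h + (4/ε + 4)/(2*n) := by field_simp
    _ < ε := by
        have q1 : (4/ε + 4)/(2*n) < (ε*n)/(2*n) := by gcongr
        have q2 : (ε*n)/(2*n) = ε/2 := by field_simp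
        have q3 : ε*h ≤ ε*(1/2) := mul_le_mul_of_nonneg_left h1 hε.le
        rw [q2] at q1
        linarith
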